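/- Let K ≥ 2 be an integer, let r_2, …, r_K be reals with 1/2 > r_2 ≥ r_3 ≥ … ≥ r_K > 0, let d_1 ≥ d_2 ≥ … ≥ d_K > 0 be reals, and let i ∈ {2,…,K}. Define gaps g_2 = 1/2 − r_i, g_j = (1 − r_i) − r_{j−1} for 3 ≤ j ≤ i, and g_j = (1 − r_i) − r_j for i+1 ≤ j ≤ K. Then max_{2 ≤ k ≤ K} ( (Σ_{a=1}^k d_a) / g_k² ) ≤ max_{2 ≤ k ≤ K} ( (Σ_{a=1}^k d_a) / (1/2 − r_k)² ). -/

import Mathlib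

theorem H2_flipped_le_H2_base (K : ℕ) (hK : 2 ≤ K)
    (r : ℕ → ℝ) (hr2 : r 2 < 1 / 2)
    (hrmono : ∀ k, 2 ≤ k → k < K → r (k + 1) ≤ r k) (hrK : 0 < r K)
    (d : ℕ → ℝ) (hdmono : ∀ k, 1 ≤ k → k < K → d (k + 1) ≤ d k) (hdK : 0 < d K)
    (i : ℕ) (hi2 : 2 ≤ i) (hiK : i ≤ K)
    (g : ℕ → ℝ) (hg2 : g 2 = 1 / 2 - r i)
    (hgmid : ∀ j, 3 ≤ j → j ≤ i → g j = (1 - r i) - r (j - 1))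
    (hgtail : ∀ j, i + 1 ≤ j → j ≤ K → g j = (1 - r i) - r j) :
    (Finset.Icc 2 K).sup' (Finset.nonempty_Icc.mpr hK)
        (fun k => (∑ a ∈ Finset.Icc 1 k, d a) / (g k) ^ 2)
      ≤ (Finset.Icc 2 K).sup' (Finset.nonempty_Icc.mpr hK)
        (fun k => (∑ a ∈ Finset.Icc 1 k, d a) / (1 / 2 - r k) ^ 2) := by
  -- monotonicity of r on [2, K]
  have rmono : ∀ a b, 2 ≤ a → a ≤ b → b ≤ K → r b ≤ r a := by
    intro a b ha hab hbK
    induction b with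
    | zero => omega
    | succ n ih =>
      rcases eq_or_lt_of_le hab with h | h
      · rw [h]
      · exact le_trans (hrmono n (by omega) (by omega)) (ih (by omega) (by omega))
  -- monotonicity of d on [1, K]
  have dmono : ∀ a b, 1 ≤ a → a ≤ b → b ≤ K → d b ≤ d a := by
    intro a b ha hab hbK
    induction b with
    | zero => omega
    | succ n ih =>
      rcases eq_or_lt_of_le hab with h | h
      · rw [h]
      · exact le_trans (hdmono n (by omega) (by omega)) (ih (by omega) (by omega))
  have dpos : ∀ a, 1 ≤ a → a ≤ K → 0 < d a := fun a h1 h2 =>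
    lt_of_lt_of_le hdK (dmono a K h1 h2 le_rfl)
  have rlt : ∀ k, 2 ≤ k → k ≤ K → r k < 1 / 2 := fun k h2 hk =>
    lt_of_le_of_lt (rmono 2 k le_rfl h2 hk) hr2
  have riK : r i < 1 / 2 := rlt i hi2 hiK
  apply Finset.sup'_le
  intro k hk
  rw [Finset.mem_Icc] at hk
  obtain ⟨hk2, hkK⟩ := hk
  have hsum : 0 ≤ ∑ a ∈ Finset.Icc 1 k, d a := by
    apply Finset.sum_nonneg
    intro a ha
    rw [Finset.mem_Icc] at ha
    exact le_of_lt (dpos a ha.1 (le_trans ha.2 hkK))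
  have hbase : 0 < 1 / 2 - r k := by linarith [rlt k hk2 hkK]
  -- the flipped gap dominates the base gap at the same index
  have hgap : 1 / 2 - r k ≤ g k := by
    rcases eq_or_lt_of_le hk2 with h2 | h3
    · -- k = 2
      rw [← h2, hg2]
      have := rmono 2 i le_rfl hi2 hiK
      rw [← h2] at *
      linarith
    · rcases le_or_gt k i with hki | hik
      · -- 3 ≤ k ≤ i
        rw [hgmid k (by omega) hki]
        have h1 : r i ≤ r k := rmono k i hk2 hki hiK
        have h2 : r (k - 1) < 1 / 2 := rlt (k - 1) (by omega) (by omega)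
        linarith
      · -- i + 1 ≤ k ≤ K
        rw [hgtail k (by omega) hkK]
        linarith
  have hterm : (∑ a ∈ Finset.Icc 1 k, d a) / (g k) ^ 2
      ≤ (∑ a ∈ Finset.Icc 1 k, d a) / (1 / 2 - r k) ^ 2 := by
    have hp : (1 / 2 - r k) ^ 2 ≤ (g k) ^ 2 := pow_le_pow_left₀ (le_of_lt hbase) hgap 2
    exact div_le_div_of_nonneg_left hsum (pow_pos hbase 2) hp
  exact le_trans hterm (Finset.le_sup' (fun k => (∑ a ∈ Finset.Icc 1 k, d a) / (1 / 2 - r k) ^ 2) (Finset.mem_Icc.mpr ⟨hk2, hkK⟩))
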